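/- Let n be even, M the adjacency matrix of the hypercube Cayley graph of (F₂ⁿ, Sₙ), and c a nonzero element of the row space of M, viewed as a subset of F₂ⁿ. Let ρ be minimal with c ⊆ B(0, ρ). Then for every coordinate index i ∈ {1,…,n}, there exists an element of c ∩ S(0, ρ) whose i-th coordinate equals 1. -/

import Mathlib

open Finset

private lemma zmod2_add_one_ne_zero : ∀ a : ZMod 2, (a + 1 ≠ 0 ↔ a = 0) := by decide

private lemma zmod2_ne_zero : ∀ a : ZMod 2, (a ≠ 0 ↔ a = 1) := by decide

private lemma zmod2_sub_eq_add : ∀ a b : ZMod 2, a - b = a + b := by decide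

private lemma zmod2_add_self : ∀ a : ZMod 2, a + a = 0 := by decide

private lemma even_cast_zmod2 {m : ℕ} (h : Even m) : (m : ZMod 2) = 0 :=
  (ZMod.natCast_eq_zero_iff m 2).mpr h.two_dvd

private lemma flip_norm_of_zero {n : ℕ} (v : Fin n → ZMod 2) (j : Fin n) (h : v j = 0) :
    hammingNorm (v + (Pi.single j 1 : Fin n → ZMod 2)) = hammingNorm v + 1 := by
  unfold hammingNorm
  have : (filter (fun i => (v + (Pi.single j 1 : Fin n → ZMod 2)) i ≠ 0) univ)
      = insert j (filter (fun i => v i ≠ 0) univ) := by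
    ext i
    by_cases hi : i = j
    · subst hi; simp [h, zmod2_add_one_ne_zero]
    · simp [hi, Pi.single_eq_of_ne hi]
  rw [this, Finset.card_insert_of_notMem (by simp [h])]

private lemma flip_norm_of_ne_zero {n : ℕ} (v : Fin n → ZMod 2) (j : Fin n) (h : v j ≠ 0) :
    hammingNorm (v + (Pi.single j 1 : Fin n → ZMod 2)) = hammingNorm v - 1 := by
  unfold hammingNorm
  have hj1 : v j = 1 := (zmod2_ne_zero _).mp h
  have : (filter (fun i => (v + (Pi.single j 1 : Fin n → ZMod 2)) i ≠ 0) univ)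
      = (filter (fun i => v i ≠ 0) univ).erase j := by
    ext i
    by_cases hi : i = j
    · subst hi; simp [hj1, show (1:ZMod 2)+1 = 0 from by decide]
    · simp [hi, Pi.single_eq_of_ne hi]
  rw [this, Finset.card_erase_of_mem (by simp [h])]

private lemma row_sum {n : ℕ} (hn : Even n)
    (M : Matrix (Fin n → ZMod 2) (Fin n → ZMod 2) (ZMod 2))
    (hM : ∀ x y, M x y = if hammingDist x y = 1 then 1 else 0)
    (u w : Fin n → ZMod 2) :
    ∑ j : Fin n, M u (w + (Pi.single j 1 : Fin n → ZMod 2)) = 0 := by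
  set v : Fin n → ZMod 2 := u + w with hv
  have hdist : ∀ j : Fin n, hammingDist u (w + (Pi.single j 1 : Fin n → ZMod 2))
      = hammingNorm (v + (Pi.single j 1 : Fin n → ZMod 2)) := by
    intro j
    rw [hammingDist_eq_hammingNorm]
    congr 1
    funext i
    simp only [Pi.sub_apply, Pi.add_apply, hv]
    rw [Pi.neg_apply, show ∀ a : ZMod 2, -a = a from by decide]
    ring
  have hsum : ∑ j : Fin n, M u (w + (Pi.single j 1 : Fin n → ZMod 2))
      = ((filter (fun j => hammingNorm (v + (Pi.single j 1 : Fin n → ZMod 2)) = 1) univ).card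
        : ZMod 2) := by
    simp_rw [hM, hdist]
    rw [Finset.sum_boole]
  rw [hsum]
  by_cases h0 : hammingNorm v = 0
  · have hv0 : v = 0 := hammingNorm_eq_zero.mp h0
    have : (filter (fun j => hammingNorm (v + (Pi.single j 1 : Fin n → ZMod 2)) = 1) univ)
        = univ := by
      ext j; simp [flip_norm_of_zero v j (by simp [hv0]), h0]
    rw [this, Finset.card_univ, Fintype.card_fin]
    exact even_cast_zmod2 hn
  by_cases h2 : hammingNorm v = 2
  · have : (filter (fun j => hammingNorm (v + (Pi.single j 1 : Fin n → ZMod 2)) = 1) univ)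
        = filter (fun j => v j ≠ 0) univ := by
      ext j
      by_cases hj : v j = 0
      · simp [hj, flip_norm_of_zero v j hj, h2]
      · simp [hj, flip_norm_of_ne_zero v j hj, h2]
    rw [this]
    exact even_cast_zmod2
      (by rw [show (filter (fun j => v j ≠ 0) univ).card = hammingNorm v from rfl, h2]
          exact even_two)
  · have : (filter (fun j => hammingNorm (v + (Pi.single j 1 : Fin n → ZMod 2)) = 1) univ)
        = ∅ := by
      ext j
      by_cases hj : v j = 0
      · simp only [mem_filter, mem_univ, true_and, notMem_empty, iff_false]
        rw [flip_norm_of_zero v j hj]; omega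
      · simp only [mem_filter, mem_univ, true_and, notMem_empty, iff_false]
        rw [flip_norm_of_ne_zero v j hj]
        have : 1 ≤ hammingNorm v := by
          have hvne : v ≠ 0 := fun hv0 => hj (by simp [hv0])
          have := hammingNorm_pos_iff.mpr hvne
          omega
        omega
    rw [this]; simp

private lemma key_sum {n : ℕ} (hn : Even n)
    (M : Matrix (Fin n → ZMod 2) (Fin n → ZMod 2) (ZMod 2))
    (hM : ∀ x y, M x y = if hammingDist x y = 1 then 1 else 0)
    (c : (Fin n → ZMod 2) → ZMod 2)
    (hc : c ∈ Submodule.span (ZMod 2) (Set.range M)) :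
    ∀ w, ∑ j : Fin n, c (w + (Pi.single j 1 : Fin n → ZMod 2)) = 0 := by
  induction hc using Submodule.span_induction with
  | mem x hx =>
    obtain ⟨u, rfl⟩ := hx
    exact fun w => row_sum hn M hM u w
  | zero => intro w; simp
  | add x y _ _ hx hy =>
    intro w
    simp only [Pi.add_apply]
    rw [Finset.sum_add_distrib, hx w, hy w, add_zero]
  | smul a x _ hx =>
    intro w
    simp only [Pi.smul_apply, smul_eq_mul]
    rw [← Finset.mul_sum, hx w, mul_zero]

/-- for even `n`, let `c` be a nonzero word of the row space of the
hypercube adjacency matrix `M`, and `ρ` minimal with the support of `c` contained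
in `B(0,ρ)`. Then for every coordinate `i` there is an element of `c ∩ S(0,ρ)`
whose `i`-th coordinate is `1`. -/
theorem stmt10 (n : ℕ) (hn : Even n)
    (M : Matrix (Fin n → ZMod 2) (Fin n → ZMod 2) (ZMod 2))
    (hM : ∀ x y, M x y = if hammingDist x y = 1 then 1 else 0)
    (c : (Fin n → ZMod 2) → ZMod 2)
    (hc : c ∈ Submodule.span (ZMod 2) (Set.range M)) (hne : c ≠ 0)
    (ρ : ℕ)
    (hball : ∀ y, c y ≠ 0 → hammingNorm y ≤ ρ)
    (hmin : ∀ ρ' < ρ, ∃ y, c y ≠ 0 ∧ ρ' < hammingNorm y) :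
    ∀ i : Fin n, ∃ y, c y ≠ 0 ∧ hammingNorm y = ρ ∧ y i = 1 := by
  intro i
  have key := key_sum hn M hM c hc
  by_cases hρ : ρ = 0
  · exfalso
    subst hρ
    obtain ⟨y0, hy0⟩ := Function.ne_iff.mp hne
    rw [Pi.zero_apply] at hy0
    have hy00 : y0 = 0 := hammingNorm_eq_zero.mp (Nat.le_zero.mp (hball y0 hy0))
    subst hy00
    have hkey := key (Pi.single i 1)
    rw [← Finset.add_sum_erase univ _ (mem_univ i)] at hkey
    have h1 : (Pi.single i 1 : Fin n → ZMod 2) + Pi.single i 1 = 0 :=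
      funext fun k => zmod2_add_self _
    rw [h1] at hkey
    rw [Finset.sum_eq_zero (fun j hj => ?_), add_zero] at hkey
    · exact hy0 hkey
    · have hji : j ≠ i := (Finset.mem_erase.mp hj).1
      by_contra hcx
      have hle := Nat.le_zero.mp (hball _ hcx)
      have : ((Pi.single i 1 + Pi.single j 1 : Fin n → ZMod 2)) j = 1 := by
        simp [Pi.single_eq_of_ne hji]
      rw [hammingNorm_eq_zero.mp hle] at this
      simp at this
  · obtain ⟨y, hcy, hylt⟩ := hmin (ρ - 1) (by omega)
    have hyρ : hammingNorm y = ρ := le_antisymm (hball y hcy) (by omega)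
    by_cases hyi : y i = 0
    · set w : Fin n → ZMod 2 := y + Pi.single i 1 with hwdef
      have hw : hammingNorm w = ρ + 1 := by
        rw [hwdef, flip_norm_of_zero y i hyi, hyρ]
      have hkey := key w
      have hwi : w + (Pi.single i 1 : Fin n → ZMod 2) = y :=
        funext fun k => by
          simp only [hwdef, Pi.add_apply, add_assoc, zmod2_add_self, add_zero]
      rw [← Finset.add_sum_erase univ _ (mem_univ i), hwi] at hkey
      by_cases hall : ∀ j ∈ univ.erase i, c (w + (Pi.single j 1 : Fin n → ZMod 2)) = 0
      · rw [Finset.sum_eq_zero hall, add_zero] at hkey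
        exact absurd hkey hcy
      · push_neg at hall
        obtain ⟨j, hj, hcx⟩ := hall
        have hji : j ≠ i := (Finset.mem_erase.mp hj).1
        have hxle := hball _ hcx
        by_cases hwj : w j = 0
        · exfalso
          have := flip_norm_of_zero w j hwj
          omega
        · have hxρ : hammingNorm (w + (Pi.single j 1 : Fin n → ZMod 2)) = ρ := by
            have := flip_norm_of_ne_zero w j hwj
            omega
          refine ⟨w + Pi.single j 1, hcx, hxρ, ?_⟩
          show ((y + Pi.single i 1 + Pi.single j 1 : Fin n → ZMod 2)) i = 1
          simp [Pi.single_eq_of_ne (Ne.symm hji), hyi]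
    · exact ⟨y, hcy, hyρ, (zmod2_ne_zero _).mp hyi⟩
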